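/- Let δ be an integer and λ, μ partitions with at most n parts. Then λ̂ + ρ_n(δ) and μ̂ + ρ_n(δ) are related by a permutation of coordinates {0,...,n} if and only if λ and μ lie in a common maximal chain of δ-pairs λ^{(0)} ⊂ λ^{(1)} ⊂ ... ⊂ λ^{(r)} where consecutive terms (λ^{(i-1)}, λ^{(i)}) form a δ-pair differing in row i. -/

import Mathlib

def IsPartWithin (n : ℕ) (f : ℕ → ℕ) : Prop :=
  (∀ i j, i ≤ j → f j ≤ f i) ∧ ∀ i, n ≤ i → f i = 0

def psize (n : ℕ) (f : ℕ → ℕ) : ℕ := ∑ i ∈ Finset.range n, f i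

/-- a partition in `Λ_{≤ n}` (at most `n` parts, size at most `n`). -/
def GoodPart (n : ℕ) (f : ℕ → ℕ) : Prop := IsPartWithin n f ∧ psize n f ≤ n

def hatP (n : ℕ) (f : ℕ → ℕ) : Fin (n + 1) → ℤ :=
  fun m => if (m : ℕ) = 0 then -(psize n f : ℤ) else (f ((m : ℕ) - 1) : ℤ)

def rhoP (n : ℕ) (δ : ℤ) : Fin (n + 1) → ℤ :=
  fun m => if (m : ℕ) = 0 then δ else -((m : ℕ) : ℤ)

/-- `(μ, λ)` is a `δ`-pair differing in row `i` (1-indexed): `λ \ μ` is a horizontal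
strip in row `i` whose last box has content `λ_i - i = δ - |μ|`. -/
def DeltaPairRow (n : ℕ) (δ : ℤ) (μ lam : ℕ → ℕ) (i : ℕ) : Prop :=
  (∀ j, j ≠ i - 1 → lam j = μ j) ∧ μ (i - 1) < lam (i - 1) ∧
    (lam (i - 1) : ℤ) - i = δ - psize n μ

namespace DChain

def Rw (f : ℕ → ℕ) (k : ℕ) : ℤ := (f k : ℤ) - (k + 1)

def piv (n : ℕ) (δ : ℤ) (f : ℕ → ℕ) : ℤ := δ - psize n f

def Vf (n : ℕ) (δ : ℤ) (f : ℕ → ℕ) (m : ℕ) : ℤ :=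
  if m = 0 then piv n δ f else Rw f (m - 1)

def af (n : ℕ) (δ : ℤ) (f : ℕ → ℕ) : ℕ :=
  ((Finset.range n).filter (fun j => piv n δ f < Rw f j)).card

def Zf (n : ℕ) (δ : ℤ) (f : ℕ → ℕ) (j : ℕ) : ℤ :=
  if j < af n δ f then Rw f j else if j = af n δ f then piv n δ f else Rw f (j - 1)

def cw (n : ℕ) (Z : ℕ → ℤ) (s k : ℕ) : ℕ :=
  if k < n then (if k < s then Z k + (k + 1) else Z (k + 1) + (k + 1)).toNat else 0

lemma Vf_eq (n : ℕ) (δ : ℤ) (f : ℕ → ℕ) (m : Fin (n + 1)) :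
    hatP n f m + rhoP n δ m = Vf n δ f (m : ℕ) := by
  simp only [hatP, rhoP, Vf, piv, Rw]
  rcases Nat.eq_zero_or_pos (m : ℕ) with h | h
  · rw [if_pos h, if_pos h, if_pos h]; ring
  · rw [if_neg (by omega), if_neg (by omega), if_neg (by omega)]
    omega

lemma Rw_succ_lt (f : ℕ → ℕ) (hf : ∀ i j, i ≤ j → f j ≤ f i) (k : ℕ) :
    Rw f (k + 1) < Rw f k := by
  have := hf k (k + 1) (Nat.le_succ k)
  unfold Rw; omega

lemma lt_of_adj (F : ℕ → ℤ) (m : ℕ) (h : ∀ i, i + 1 ≤ m → F (i + 1) < F i) :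
    ∀ i j, i < j → j ≤ m → F j < F i := by
  intro i j hij hjm
  induction j with
  | zero => omega
  | succ j ih =>
    rcases Nat.lt_or_ge i j with h' | h'
    · exact lt_trans (h j hjm) (ih h' (by omega))
    · have hij' : i = j := by omega
      subst hij'; exact h i hjm

lemma adj_bound (Z : ℕ → ℤ) (m : ℕ) (h : ∀ i, i + 1 ≤ m → Z (i + 1) < Z i) :
    ∀ i j, i ≤ j → j ≤ m → Z j + (j : ℤ) ≤ Z i + (i : ℤ) := by
  intro i j hij hjm
  induction j with
  | zero => have : i = 0 := by omega
            subst this; exact le_refl _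
  | succ j ih =>
    rcases Nat.lt_or_ge i (j + 1) with h' | h'
    · have h1 := h j hjm
      have h2 := ih (by omega) (by omega)
      push_cast at *; omega
    · have : i = j + 1 := by omega
      subst this; exact le_refl _

lemma dc_eq_range (S : Finset ℕ) (h : ∀ j ∈ S, ∀ i, i < j → i ∈ S) :
    S = Finset.range S.card := by
  have hsub : Finset.range S.card ⊆ S := by
    intro i hi
    rw [Finset.mem_range] at hi
    by_contra hn
    have hPS : S ⊆ Finset.range i := by
      intro j hj
      rw [Finset.mem_range]
      rcases Nat.lt_or_ge j i with h' | h'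
      · exact h'
      · exfalso
        rcases Nat.eq_or_lt_of_le h' with h'' | h''
        · exact hn (h'' ▸ hj)
        · exact hn (h j hj i h'')
    have := Finset.card_le_card hPS
    simp only [Finset.card_range] at this; omega
  exact (Finset.eq_of_subset_of_card_le hsub (le_of_eq (Finset.card_range S.card).symm)).symm

lemma psize_diff (n : ℕ) (f g : ℕ → ℕ) (t : ℕ) (ht : t < n)
    (h : ∀ j, j ≠ t → g j = f j) :
    (psize n g : ℤ) = (psize n f : ℤ) + (g t : ℤ) - (f t : ℤ) := by
  unfold psize
  push_cast
  have key : ∑ k ∈ Finset.range n, ((g k : ℤ) - (f k : ℤ)) = (g t : ℤ) - (f t : ℤ) := by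
    apply Finset.sum_eq_single t
    · intro b _ hb; rw [h b hb]; ring
    · intro hnt; exact absurd (Finset.mem_range.2 ht) hnt
  have := Finset.sum_sub_distrib (s := Finset.range n) (f := fun k => (g k : ℤ))
      (g := fun k => (f k : ℤ))
  rw [this] at key
  linarith

lemma sorted_unique : ∀ (m : ℕ) (f g : ℕ → ℤ),
    (∀ i j, i < j → j ≤ m → f j < f i) → (∀ i j, i < j → j ≤ m → g j < g i) →
    Finset.image f (Finset.range (m + 1)) = Finset.image g (Finset.range (m + 1)) →
    ∀ j ≤ m, f j = g j := by
  intro m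
  induction m with
  | zero =>
    intro f g _ _ him j hj
    have h0 : j = 0 := by omega
    subst h0
    have : f 0 ∈ Finset.image g (Finset.range 1) :=
      him ▸ Finset.mem_image_of_mem f (Finset.mem_range.2 (by omega))
    simp only [Finset.range_one, Finset.image_singleton, Finset.mem_singleton] at this
    exact this
  | succ m ih =>
    intro f g hf hg him
    have h0 : f 0 = g 0 := by
      have h1 : f 0 ∈ Finset.image g (Finset.range (m + 2)) :=
        him ▸ Finset.mem_image_of_mem f (Finset.mem_range.2 (by omega))
      have h2 : g 0 ∈ Finset.image f (Finset.range (m + 2)) :=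
        him.symm ▸ Finset.mem_image_of_mem g (Finset.mem_range.2 (by omega))
      obtain ⟨j, hj, hfj⟩ := Finset.mem_image.1 h1
      obtain ⟨i, hi, hgi⟩ := Finset.mem_image.1 h2
      rw [Finset.mem_range] at hj hi
      have e1 : g j ≤ g 0 := by
        rcases Nat.eq_zero_or_pos j with h | h
        · subst h; exact le_refl _
        · exact le_of_lt (hg 0 j h (by omega))
      have e2 : f i ≤ f 0 := by
        rcases Nat.eq_zero_or_pos i with h | h
        · subst h; exact le_refl _
        · exact le_of_lt (hf 0 i h (by omega))
      omega
    have himg : Finset.image (fun k => f (k + 1)) (Finset.range (m + 1)) =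
        Finset.image (fun k => g (k + 1)) (Finset.range (m + 1)) := by
      ext x
      simp only [Finset.mem_image, Finset.mem_range]
      constructor
      · rintro ⟨k, hk, rfl⟩
        have hx : f (k + 1) ∈ Finset.image g (Finset.range (m + 2)) :=
          him ▸ Finset.mem_image_of_mem f (Finset.mem_range.2 (by omega))
        obtain ⟨j, hj, hgj⟩ := Finset.mem_image.1 hx
        rw [Finset.mem_range] at hj
        rcases Nat.eq_zero_or_pos j with h | h
        · exfalso
          subst h
          have := hf 0 (k + 1) (by omega) (by omega)
          omega
        · exact ⟨j - 1, by omega, by rw [show j - 1 + 1 = j by omega]; exact hgj⟩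
      · rintro ⟨k, hk, rfl⟩
        have hx : g (k + 1) ∈ Finset.image f (Finset.range (m + 2)) :=
          him.symm ▸ Finset.mem_image_of_mem g (Finset.mem_range.2 (by omega))
        obtain ⟨j, hj, hgj⟩ := Finset.mem_image.1 hx
        rw [Finset.mem_range] at hj
        rcases Nat.eq_zero_or_pos j with h | h
        · exfalso
          subst h
          have := hg 0 (k + 1) (by omega) (by omega)
          omega
        · exact ⟨j - 1, by omega, by rw [show j - 1 + 1 = j by omega]; exact hgj⟩
    intro j hj
    rcases Nat.eq_zero_or_pos j with h | h
    · subst h; exact h0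
    · have := ih (fun k => f (k + 1)) (fun k => g (k + 1))
        (fun i j hij hjm => hf (i + 1) (j + 1) (by omega) (by omega))
        (fun i j hij hjm => hg (i + 1) (j + 1) (by omega) (by omega))
        himg (j - 1) (by omega)
      simpa [show j - 1 + 1 = j by omega] using this


lemma af_le (n : ℕ) (δ : ℤ) (f : ℕ → ℕ) : af n δ f ≤ n :=
  le_trans (Finset.card_filter_le _ _) (le_of_eq (Finset.card_range n))

lemma mem_af_iff (n : ℕ) (δ : ℤ) (f : ℕ → ℕ) (hf : ∀ i j, i ≤ j → f j ≤ f i) (j : ℕ) :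
    j < af n δ f ↔ j < n ∧ piv n δ f < Rw f j := by
  set S := (Finset.range n).filter (fun j => piv n δ f < Rw f j) with hS
  have hdc : ∀ j ∈ S, ∀ i, i < j → i ∈ S := by
    intro j hj i hij
    simp only [hS, Finset.mem_filter, Finset.mem_range] at hj ⊢
    refine ⟨by omega, lt_trans hj.2 ?_⟩
    exact lt_of_adj (Rw f) j (fun i _ => Rw_succ_lt f hf i) i j hij (le_refl j)
  have hr := dc_eq_range S hdc
  unfold af
  rw [← hS]
  constructor
  · intro h
    have : j ∈ S := by rw [hr]; exact Finset.mem_range.2 h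
    simp only [hS, Finset.mem_filter, Finset.mem_range] at this
    exact this
  · intro h
    have : j ∈ S := by simp only [hS, Finset.mem_filter, Finset.mem_range]; exact h
    rw [hr] at this
    exact Finset.mem_range.1 this

lemma Zf_at_af (n : ℕ) (δ : ℤ) (f : ℕ → ℕ) : Zf n δ f (af n δ f) = piv n δ f := by
  simp [Zf]

lemma Zf_adj (n : ℕ) (δ : ℤ) (f : ℕ → ℕ) (hf : ∀ i j, i ≤ j → f j ≤ f i)
    (hinj : ∀ j, j < n → Rw f j ≠ piv n δ f) :
    ∀ j, j + 1 ≤ n → Zf n δ f (j + 1) < Zf n δ f j := by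
  intro j hj
  set a := af n δ f with ha
  unfold Zf
  rw [← ha]
  rcases Nat.lt_trichotomy (j + 1) a with h | h | h
  · rw [if_pos h, if_pos (by omega)]
    exact Rw_succ_lt f hf j
  · rw [if_neg (by omega), if_pos h, if_pos (by omega)]
    exact ((mem_af_iff n δ f hf j).1 (by omega)).2
  · rcases Nat.lt_trichotomy j a with h' | h' | h'
    · omega
    · rw [if_neg (by omega), if_neg (by omega), if_neg (by omega), if_pos h']
      have h1 : j + 1 - 1 = a := by omega
      rw [h1]
      have han : a < n := by omega
      have h2 : ¬ (piv n δ f < Rw f a) := by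
        intro hc
        have : a < a := (mem_af_iff n δ f hf a).2 ⟨han, hc⟩
        omega
      have h3 := hinj a han
      omega
    · rw [if_neg (by omega), if_neg (by omega), if_neg (by omega), if_neg (by omega)]
      have h1 : j + 1 - 1 = (j - 1) + 1 := by omega
      rw [h1]
      exact Rw_succ_lt f hf (j - 1)

lemma cw_self (n : ℕ) (δ : ℤ) (f : ℕ → ℕ) (hf : GoodPart n f) (k : ℕ) :
    f k = cw n (Zf n δ f) (af n δ f) k := by
  set a := af n δ f with ha
  unfold cw
  by_cases hk : k < n
  · rw [if_pos hk]
    by_cases hka : k < a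
    · rw [if_pos hka]
      unfold Zf
      rw [← ha, if_pos hka]
      have : Rw f k + ((k : ℤ) + 1) = (f k : ℤ) := by unfold Rw; ring
      rw [this, Int.toNat_natCast]
    · rw [if_neg hka]
      unfold Zf
      rw [← ha, if_neg (by omega), if_neg (by omega)]
      have h1 : k + 1 - 1 = k := by omega
      rw [h1]
      have : Rw f k + ((k : ℤ) + 1) = (f k : ℤ) := by unfold Rw; ring
      rw [this, Int.toNat_natCast]
  · rw [if_neg hk]
    exact hf.1.2 k (by omega)

lemma cw_congr (n : ℕ) (Z Z' : ℕ → ℤ) (s k : ℕ) (h : ∀ j, j ≤ n → Z' j = Z j) :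
    cw n Z' s k = cw n Z s k := by
  unfold cw
  by_cases hk : k < n
  · rw [if_pos hk, if_pos hk]
    by_cases hks : k < s
    · rw [if_pos hks, if_pos hks, h k (by omega)]
    · rw [if_neg hks, if_neg hks, h (k + 1) (by omega)]
  · rw [if_neg hk, if_neg hk]

lemma image_Zf (n : ℕ) (δ : ℤ) (f : ℕ → ℕ) :
    Finset.image (Zf n δ f) (Finset.range (n + 1)) =
      Finset.image (Vf n δ f) (Finset.range (n + 1)) := by
  have haf := af_le n δ f
  set a := af n δ f with ha
  apply Finset.Subset.antisymm
  · intro x hx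
    obtain ⟨j, hj, rfl⟩ := Finset.mem_image.1 hx
    rw [Finset.mem_range] at hj
    rcases Nat.lt_trichotomy j a with h | h | h
    · refine Finset.mem_image.2 ⟨j + 1, Finset.mem_range.2 (by omega), ?_⟩
      unfold Vf Zf
      rw [← ha, if_neg (by omega), if_pos h]
      simp
    · refine Finset.mem_image.2 ⟨0, Finset.mem_range.2 (by omega), ?_⟩
      unfold Vf Zf
      rw [← ha, if_pos rfl, if_neg (by omega), if_pos h]
    · refine Finset.mem_image.2 ⟨j, Finset.mem_range.2 (by omega), ?_⟩
      unfold Vf Zf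
      rw [← ha, if_neg (by omega), if_neg (by omega), if_neg (by omega)]
  · intro x hx
    obtain ⟨m, hm, rfl⟩ := Finset.mem_image.1 hx
    rw [Finset.mem_range] at hm
    rcases Nat.eq_zero_or_pos m with h | h
    · subst h
      refine Finset.mem_image.2 ⟨a, Finset.mem_range.2 (by omega), ?_⟩
      unfold Vf Zf
      rw [← ha, if_neg (by omega), if_pos rfl, if_pos rfl]
    · by_cases hma : m - 1 < a
      · refine Finset.mem_image.2 ⟨m - 1, Finset.mem_range.2 (by omega), ?_⟩
        unfold Vf Zf
        rw [← ha, if_pos hma, if_neg (by omega)]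
      · refine Finset.mem_image.2 ⟨m, Finset.mem_range.2 (by omega), ?_⟩
        unfold Vf Zf
        rw [← ha, if_neg (by omega), if_neg (by omega), if_neg (by omega)]

lemma image_dup (n : ℕ) (δ : ℤ) (f : ℕ → ℕ) (s : ℕ) (hs : s < n)
    (hdup : Rw f s = piv n δ f) :
    Finset.image (Rw f) (Finset.range n) = Finset.image (Vf n δ f) (Finset.range (n + 1)) := by
  apply Finset.Subset.antisymm
  · intro x hx
    obtain ⟨j, hj, rfl⟩ := Finset.mem_image.1 hx
    rw [Finset.mem_range] at hj
    refine Finset.mem_image.2 ⟨j + 1, Finset.mem_range.2 (by omega), ?_⟩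
    unfold Vf
    rw [if_neg (by omega)]
    simp
  · intro x hx
    obtain ⟨m, hm, rfl⟩ := Finset.mem_image.1 hx
    rw [Finset.mem_range] at hm
    rcases Nat.eq_zero_or_pos m with h | h
    · subst h
      refine Finset.mem_image.2 ⟨s, Finset.mem_range.2 hs, ?_⟩
      unfold Vf
      rw [if_pos rfl]
      exact hdup
    · refine Finset.mem_image.2 ⟨m - 1, Finset.mem_range.2 (by omega), ?_⟩
      unfold Vf
      rw [if_neg (by omega)]

lemma dup_of_eq (n : ℕ) (δ : ℤ) (f : ℕ → ℕ) (hf : ∀ i j, i ≤ j → f j ≤ f i)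
    (x y : ℕ) (hx : x ≤ n) (hy : y ≤ n) (hxy : x ≠ y)
    (he : Vf n δ f x = Vf n δ f y) : ∃ t, t < n ∧ Rw f t = piv n δ f := by
  have hanti := fun i j (hij : i < j) =>
    lt_of_adj (Rw f) n (fun i _ => Rw_succ_lt f hf i) i j hij
  rcases Nat.eq_zero_or_pos x with h | h
  · subst h
    refine ⟨y - 1, by omega, ?_⟩
    unfold Vf at he
    rw [if_pos rfl, if_neg (by omega)] at he
    omega
  · rcases Nat.eq_zero_or_pos y with h' | h'
    · subst h'
      refine ⟨x - 1, by omega, ?_⟩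
      unfold Vf at he
      rw [if_pos rfl, if_neg (by omega)] at he
      omega
    · exfalso
      unfold Vf at he
      rw [if_neg (by omega), if_neg (by omega)] at he
      rcases Nat.lt_trichotomy (x - 1) (y - 1) with hc | hc | hc
      · have := hanti (x - 1) (y - 1) hc (by omega); omega
      · omega
      · have := hanti (y - 1) (x - 1) hc (by omega); omega


lemma cw_val (n : ℕ) (Z : ℕ → ℤ) (s k : ℕ) (hk : k < n) :
    cw n Z s k = (if k < s then Z k + ((k : ℤ) + 1) else Z (k + 1) + ((k : ℤ) + 1)).toNat := by
  unfold cw; rw [if_pos hk]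

lemma psize_cw (n : ℕ) (Z : ℕ → ℤ) (s : ℕ) (hs : s ≤ n)
    (hnn : ∀ k, k < n → 0 ≤ if k < s then Z k + ((k : ℤ) + 1) else Z (k + 1) + ((k : ℤ) + 1)) :
    (psize n (cw n Z s) : ℤ) + Z s
      = (∑ j ∈ Finset.range (n + 1), Z j) + ∑ k ∈ Finset.range n, ((k : ℤ) + 1) := by
  unfold psize
  push_cast
  have h1 : ∀ k ∈ Finset.range n, (cw n Z s k : ℤ)
      = (if k < s then Z k else Z (k + 1)) + ((k : ℤ) + 1) := by
    intro k hk
    rw [Finset.mem_range] at hk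
    unfold cw
    rw [if_pos hk]
    rw [Int.toNat_of_nonneg (hnn k hk)]
    split_ifs <;> ring
  rw [Finset.sum_congr rfl h1, Finset.sum_add_distrib]
  have e1 : ∑ k ∈ Finset.Ico 0 s, (if k < s then Z k else Z (k + 1))
      = ∑ k ∈ Finset.Ico 0 s, Z k :=
    Finset.sum_congr rfl (fun k hk => if_pos (Finset.mem_Ico.1 hk).2)
  have e2 : ∑ k ∈ Finset.Ico s n, (if k < s then Z k else Z (k + 1))
      = ∑ k ∈ Finset.Ico s n, Z (k + 1) :=
    Finset.sum_congr rfl (fun k hk => if_neg (by have := (Finset.mem_Ico.1 hk).1; omega))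
  have e3 : ∑ k ∈ Finset.Ico s n, Z (k + 1) = ∑ j ∈ Finset.Ico (s + 1) (n + 1), Z j := by
    rw [Finset.sum_Ico_eq_sum_range, Finset.sum_Ico_eq_sum_range]
    rw [show n + 1 - (s + 1) = n - s by omega]
    exact Finset.sum_congr rfl (fun i _ => congrArg Z (by omega))
  have e4 : ∑ j ∈ Finset.Ico 0 (s + 1), Z j + ∑ j ∈ Finset.Ico (s + 1) (n + 1), Z j
      = ∑ j ∈ Finset.Ico 0 (n + 1), Z j :=
    Finset.sum_Ico_consecutive _ (by omega) (by omega)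
  have e5 : ∑ j ∈ Finset.Ico 0 (s + 1), Z j = ∑ j ∈ Finset.Ico 0 s, Z j + Z s := by
    rw [← Finset.range_eq_Ico, ← Finset.range_eq_Ico]
    exact Finset.sum_range_succ Z s
  have e6 : ∑ k ∈ Finset.range n, (if k < s then Z k else Z (k + 1))
      = ∑ k ∈ Finset.Ico 0 s, (if k < s then Z k else Z (k + 1))
        + ∑ k ∈ Finset.Ico s n, (if k < s then Z k else Z (k + 1)) := by
    rw [Finset.range_eq_Ico, ← Finset.sum_Ico_consecutive _ (Nat.zero_le s) hs]
  have e7 : ∑ j ∈ Finset.range (n + 1), Z j = ∑ j ∈ Finset.Ico 0 (n + 1), Z j := by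
    rw [Finset.range_eq_Ico]
  linarith

lemma cw_antit (n : ℕ) (Z : ℕ → ℤ) (s : ℕ)
    (hZadj : ∀ i, i + 1 ≤ n → Z (i + 1) < Z i) (k : ℕ) :
    cw n Z s (k + 1) ≤ cw n Z s k := by
  by_cases hk : k + 1 < n
  · unfold cw
    rw [if_pos hk, if_pos (show k < n by omega)]
    apply Int.toNat_le_toNat
    push_cast
    split_ifs with h1 h2 h2
    · have := hZadj k (by omega); omega
    · omega
    · have := hZadj k (by omega); have := hZadj (k + 1) (by omega); omega
    · have := hZadj (k + 1) (by omega); omega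
  · unfold cw
    rw [if_neg hk]
    exact Nat.zero_le _

lemma swap_step (n : ℕ) (δ : ℤ) (f g : ℕ → ℕ) (i : ℕ) (h1 : 1 ≤ i) (hn : i ≤ n)
    (hd : DeltaPairRow n δ f g i) :
    ∀ m : Fin (n + 1), hatP n f m + rhoP n δ m =
      hatP n g (Equiv.swap 0 ⟨i, by omega⟩ m) + rhoP n δ (Equiv.swap 0 ⟨i, by omega⟩ m) := by
  obtain ⟨hd1, hd2, hd3⟩ := hd
  have hps : (psize n g : ℤ) = (psize n f : ℤ) + (g (i - 1) : ℤ) - (f (i - 1) : ℤ) :=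
    psize_diff n f g (i - 1) (by omega) hd1
  intro m
  rw [Vf_eq, Vf_eq]
  by_cases hm0 : m = 0
  · subst hm0
    rw [Equiv.swap_apply_left]
    have e0 : ((0 : Fin (n + 1)) : ℕ) = 0 := rfl
    have ei : ((⟨i, by omega⟩ : Fin (n + 1)) : ℕ) = i := rfl
    rw [e0, ei]
    unfold Vf
    rw [if_pos rfl, if_neg (by omega)]
    unfold piv Rw
    omega
  · by_cases hmi : m = ⟨i, by omega⟩
    · subst hmi
      rw [Equiv.swap_apply_right]
      have e0 : ((0 : Fin (n + 1)) : ℕ) = 0 := rfl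
      have ei : ((⟨i, by omega⟩ : Fin (n + 1)) : ℕ) = i := rfl
      rw [e0, ei]
      unfold Vf
      rw [if_neg (by omega), if_pos rfl]
      unfold piv Rw
      omega
    · rw [Equiv.swap_apply_of_ne_of_ne hm0 hmi]
      unfold Vf
      have hv0 : (m : ℕ) ≠ 0 := fun h => hm0 (Fin.ext h)
      have hvi : (m : ℕ) ≠ i := fun h => hmi (Fin.ext h)
      rw [if_neg hv0, if_neg hv0]
      unfold Rw
      rw [hd1 ((m : ℕ) - 1) (by omega)]

end DChain

/-- `λ̂ + ρ_n(δ)` and `μ̂ + ρ_n(δ)` are related by a permutation of the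
coordinates `{0,…,n}` if and only if `λ` and `μ` lie in a common maximal chain of
`δ`-pairs `λ^{(0)} ⊂ λ^{(1)} ⊂ ⋯ ⊂ λ^{(r)}`, consecutive terms `(λ^{(s-1)}, λ^{(s)})`
forming a `δ`-pair differing in row `s`. -/
theorem perm_iff_delta_chain (n : ℕ) (δ : ℤ) (lam mu : ℕ → ℕ)
    (hl : GoodPart n lam) (hm : GoodPart n mu) :
    (∃ σ : Equiv.Perm (Fin (n + 1)), ∀ m,
        hatP n mu m + rhoP n δ m = hatP n lam (σ m) + rhoP n δ (σ m)) ↔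
    (∃ r : ℕ, ∃ c : ℕ → (ℕ → ℕ),
        (∀ s, s ≤ r → GoodPart n (c s)) ∧
        (∀ s, 1 ≤ s → s ≤ r → DeltaPairRow n δ (c (s - 1)) (c s) s) ∧
        (¬ ∃ ν, GoodPart n ν ∧ DeltaPairRow n δ (c r) ν (r + 1)) ∧
        (∃ a, a ≤ r ∧ lam = c a) ∧ (∃ b, b ≤ r ∧ mu = c b)) := by
  constructor
  · rintro ⟨σ, hσ⟩
    have himg : Finset.image (DChain.Vf n δ mu) (Finset.range (n + 1)) =
        Finset.image (DChain.Vf n δ lam) (Finset.range (n + 1)) := by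
      apply Finset.Subset.antisymm
      · intro x hx
        obtain ⟨m, hmr, rfl⟩ := Finset.mem_image.1 hx
        rw [Finset.mem_range] at hmr
        refine Finset.mem_image.2 ⟨((σ ⟨m, hmr⟩ : Fin (n + 1)) : ℕ),
          Finset.mem_range.2 (σ ⟨m, hmr⟩).isLt, ?_⟩
        rw [← DChain.Vf_eq n δ lam (σ ⟨m, hmr⟩), ← hσ ⟨m, hmr⟩, DChain.Vf_eq]
      · intro x hx
        obtain ⟨m, hmr, rfl⟩ := Finset.mem_image.1 hx
        rw [Finset.mem_range] at hmr
        refine Finset.mem_image.2 ⟨((σ.symm ⟨m, hmr⟩ : Fin (n + 1)) : ℕ),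
          Finset.mem_range.2 (σ.symm ⟨m, hmr⟩).isLt, ?_⟩
        rw [← DChain.Vf_eq n δ mu (σ.symm ⟨m, hmr⟩), hσ (σ.symm ⟨m, hmr⟩),
          Equiv.apply_symm_apply, DChain.Vf_eq]
    by_cases hA : ∃ s, s < n ∧ DChain.Rw lam s = DChain.piv n δ lam
    · obtain ⟨s, hsn, hdup⟩ := hA
      have htrans : ∀ x : Fin (n + 1), DChain.Vf n δ mu ((σ.symm x : Fin (n + 1)) : ℕ)
          = DChain.Vf n δ lam (x : ℕ) := by
        intro x
        rw [← DChain.Vf_eq n δ mu (σ.symm x), hσ (σ.symm x), Equiv.apply_symm_apply,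
          DChain.Vf_eq]
      have h1 := htrans 0
      have h2 := htrans ⟨s + 1, by omega⟩
      have hVeq : DChain.Vf n δ mu ((σ.symm 0 : Fin (n + 1)) : ℕ)
          = DChain.Vf n δ mu ((σ.symm ⟨s + 1, by omega⟩ : Fin (n + 1)) : ℕ) := by
        rw [h1, h2]
        have e0 : ((0 : Fin (n + 1)) : ℕ) = 0 := rfl
        have ei : ((⟨s + 1, by omega⟩ : Fin (n + 1)) : ℕ) = s + 1 := rfl
        rw [e0, ei]
        unfold DChain.Vf
        rw [if_pos rfl, if_neg (by omega), show s + 1 - 1 = s by omega]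
        exact hdup.symm
      have hne : ((σ.symm 0 : Fin (n + 1)) : ℕ) ≠ ((σ.symm ⟨s + 1, by omega⟩ : Fin (n + 1)) : ℕ) := by
        intro h
        have h' : σ.symm 0 = σ.symm ⟨s + 1, by omega⟩ := Fin.ext h
        have := σ.symm.injective h'
        have := congrArg Fin.val this
        simp at this
      obtain ⟨t, htn, hdupμ⟩ := DChain.dup_of_eq n δ mu hm.1.1 _ _
        (by have := (σ.symm 0).isLt; omega)
        (by have := (σ.symm (⟨s + 1, by omega⟩ : Fin (n + 1))).isLt; omega) hne hVeq
      have himgR : Finset.image (DChain.Rw mu) (Finset.range n)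
          = Finset.image (DChain.Rw lam) (Finset.range n) := by
        rw [DChain.image_dup n δ mu t htn hdupμ, himg,
          ← DChain.image_dup n δ lam s hsn hdup]
      have hRs : ∀ j, j ≤ n - 1 → DChain.Rw mu j = DChain.Rw lam j := by
        exact DChain.sorted_unique (n - 1) (DChain.Rw mu) (DChain.Rw lam)
          (fun i j hij hjm => DChain.lt_of_adj _ (n - 1)
            (fun i _ => DChain.Rw_succ_lt mu hm.1.1 i) i j hij hjm)
          (fun i j hij hjm => DChain.lt_of_adj _ (n - 1)
            (fun i _ => DChain.Rw_succ_lt lam hl.1.1 i) i j hij hjm)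
          (by rw [show n - 1 + 1 = n by omega]; exact himgR)
      have hml : mu = lam := by
        funext k
        by_cases hk : k < n
        · have := hRs k (by omega)
          unfold DChain.Rw at this; omega
        · rw [hm.1.2 k (by omega), hl.1.2 k (by omega)]
      refine ⟨0, fun _ => lam, fun s _ => hl, fun s h1 h2 => absurd h2 (by omega), ?_,
        ⟨0, le_refl 0, rfl⟩, ⟨0, le_refl 0, hml⟩⟩
      rintro ⟨ν, hν, hd1, hd2, hd3⟩
      have hs0 : lam s ≤ lam 0 := hl.1.1 0 s (by omega)
      unfold DChain.Rw DChain.piv at hdup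
      simp only [show (1 : ℕ) - 1 = 0 from rfl] at hd2 hd3
      omega
    · push_neg at hA
      have hinjμ : ∀ t, t < n → DChain.Rw mu t ≠ DChain.piv n δ mu := by
        intro t htn hdupμ
        have htr : ∀ x : Fin (n + 1), DChain.Vf n δ mu (x : ℕ)
            = DChain.Vf n δ lam ((σ x : Fin (n + 1)) : ℕ) := by
          intro x
          rw [← DChain.Vf_eq n δ mu x, hσ x, DChain.Vf_eq]
        have h1 := htr 0
        have h2 := htr ⟨t + 1, by omega⟩
        have hVeq : DChain.Vf n δ lam ((σ 0 : Fin (n + 1)) : ℕ)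
            = DChain.Vf n δ lam ((σ ⟨t + 1, by omega⟩ : Fin (n + 1)) : ℕ) := by
          rw [← h1, ← h2]
          have e0 : ((0 : Fin (n + 1)) : ℕ) = 0 := rfl
          have ei : ((⟨t + 1, by omega⟩ : Fin (n + 1)) : ℕ) = t + 1 := rfl
          rw [e0, ei]
          unfold DChain.Vf
          rw [if_pos rfl, if_neg (by omega), show t + 1 - 1 = t by omega]
          exact hdupμ.symm
        have hne : ((σ 0 : Fin (n + 1)) : ℕ) ≠ ((σ ⟨t + 1, by omega⟩ : Fin (n + 1)) : ℕ) := by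
          intro h
          have h' : σ 0 = σ ⟨t + 1, by omega⟩ := Fin.ext h
          have := σ.injective h'
          have := congrArg Fin.val this
          simp at this
        obtain ⟨u, hun, hdupl⟩ := DChain.dup_of_eq n δ lam hl.1.1 _ _
          (by have := (σ 0).isLt; omega)
          (by have := (σ (⟨t + 1, by omega⟩ : Fin (n + 1))).isLt; omega) hne hVeq
        exact hA u hun hdupl
      have han : DChain.af n δ lam ≤ n := DChain.af_le n δ lam
      have hbn : DChain.af n δ mu ≤ n := DChain.af_le n δ mu
      have hZadj : ∀ j, j + 1 ≤ n → DChain.Zf n δ lam (j + 1) < DChain.Zf n δ lam j :=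
        DChain.Zf_adj n δ lam hl.1.1 hA
      have hZmadj : ∀ j, j + 1 ≤ n → DChain.Zf n δ mu (j + 1) < DChain.Zf n δ mu j :=
        DChain.Zf_adj n δ mu hm.1.1 hinjμ
      have hZZ : ∀ j, j ≤ n → DChain.Zf n δ mu j = DChain.Zf n δ lam j := by
        exact DChain.sorted_unique n (DChain.Zf n δ mu) (DChain.Zf n δ lam)
          (fun i j hij hjm => DChain.lt_of_adj _ n hZmadj i j hij hjm)
          (fun i j hij hjm => DChain.lt_of_adj _ n hZadj i j hij hjm)
          (by rw [DChain.image_Zf, DChain.image_Zf, himg])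
      have hZa : DChain.Zf n δ lam (DChain.af n δ lam) = δ - psize n lam :=
        DChain.Zf_at_af n δ lam
      have hZb : DChain.Zf n δ lam (DChain.af n δ mu) = δ - psize n mu := by
        rw [← hZZ _ hbn]
        exact DChain.Zf_at_af n δ mu
      have hla : lam = DChain.cw n (DChain.Zf n δ lam) (DChain.af n δ lam) :=
        funext (DChain.cw_self n δ lam hl)
      have hmb : mu = DChain.cw n (DChain.Zf n δ lam) (DChain.af n δ mu) := by
        funext k
        rw [DChain.cw_self n δ mu hm k]
        exact DChain.cw_congr n (DChain.Zf n δ lam) (DChain.Zf n δ mu) _ k hZZ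
      by_cases hsp : 0 ≤ DChain.Zf n δ lam n + n
      · -- main chain
        have hge : ∀ j, j ≤ n → -(j : ℤ) ≤ DChain.Zf n δ lam j := by
          intro j hj
          have := DChain.adj_bound (DChain.Zf n δ lam) n hZadj j n hj (le_refl n)
          push_cast at *
          omega
        have hnn : ∀ s, ∀ k, k < n → 0 ≤ if k < s then DChain.Zf n δ lam k + ((k : ℤ) + 1)
            else DChain.Zf n δ lam (k + 1) + ((k : ℤ) + 1) := by
          intro s k hk
          split_ifs
          · have := hge k (by omega); omega
          · have := hge (k + 1) (by omega); push_cast at *; omega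
        have hps : ∀ s, s ≤ n →
            (psize n (DChain.cw n (DChain.Zf n δ lam) s) : ℤ) = δ - DChain.Zf n δ lam s := by
          intro s hs
          have h1 := DChain.psize_cw n (DChain.Zf n δ lam) s hs (hnn s)
          have h2 := DChain.psize_cw n (DChain.Zf n δ lam) (DChain.af n δ lam) han
            (hnn (DChain.af n δ lam))
          rw [← hla] at h2
          have h3 : (psize n lam : ℤ) ≤ n := by exact_mod_cast hl.2
          omega
        set T := (Finset.range (n + 1)).filter
          (fun t => δ - (n : ℤ) ≤ DChain.Zf n δ lam t) with hT
        have hTdc : ∀ j ∈ T, ∀ i, i < j → i ∈ T := by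
          intro j hj i hij
          simp only [hT, Finset.mem_filter, Finset.mem_range] at hj ⊢
          refine ⟨by omega, le_trans hj.2 (le_of_lt ?_)⟩
          exact DChain.lt_of_adj _ n hZadj i j hij (by omega)
        have hTr := DChain.dc_eq_range T hTdc
        have hmemT : ∀ s, s ∈ T ↔ s < n + 1 ∧ δ - (n : ℤ) ≤ DChain.Zf n δ lam s := by
          intro s
          simp only [hT, Finset.mem_filter, Finset.mem_range]
        have hidx : ∀ s, s ∈ T ↔ s < T.card := by
          intro s
          constructor
          · intro h; exact Finset.mem_range.1 (hTr ▸ h)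
          · intro h; exact hTr ▸ Finset.mem_range.2 h
        have hTa : DChain.af n δ lam ∈ T := by
          rw [hmemT]
          have h3 : (psize n lam : ℤ) ≤ n := by exact_mod_cast hl.2
          constructor
          · omega
          · rw [hZa]; omega
        have hTb : DChain.af n δ mu ∈ T := by
          rw [hmemT]
          have h3 : (psize n mu : ℤ) ≤ n := by exact_mod_cast hm.2
          constructor
          · omega
          · rw [hZb]; omega
        have hcard : 0 < T.card := Finset.card_pos.2 ⟨_, hTa⟩
        have hcardn : T.card ≤ n + 1 := by
          have h := Finset.card_le_card (Finset.filter_subset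
            (fun t => δ - (n : ℤ) ≤ DChain.Zf n δ lam t) (Finset.range (n + 1)))
          rw [Finset.card_range] at h
          exact h
        refine ⟨T.card - 1, DChain.cw n (DChain.Zf n δ lam), ?_, ?_, ?_,
          ⟨DChain.af n δ lam, by have := (hidx _).1 hTa; omega, hla⟩,
          ⟨DChain.af n δ mu, by have := (hidx _).1 hTb; omega, hmb⟩⟩
        · intro s hs
          have hsT : s ∈ T := (hidx s).2 (by omega)
          have hsn : s ≤ n := by have := (hmemT s).1 hsT; omega
          refine ⟨⟨fun i j hij => (antitone_nat_of_succ_le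
            (DChain.cw_antit n (DChain.Zf n δ lam) s hZadj)) hij, fun i hi => ?_⟩, ?_⟩
          · unfold DChain.cw; rw [if_neg (by omega)]
          · have h1 := hps s hsn
            have h2 := ((hmemT s).1 hsT).2
            omega
        · intro s hs1 hs2
          obtain ⟨t, rfl⟩ : ∃ t, s = t + 1 := ⟨s - 1, by omega⟩
          have htn : t + 1 ≤ n := by
            have hsT : t + 1 ∈ T := (hidx _).2 (by omega)
            have := (hmemT _).1 hsT; omega
          have ht1T : t + 1 ∈ T := (hidx (t + 1)).2 (by omega)
          have htT : t ∈ T := hTdc (t + 1) ht1T t (by omega)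
          refine ⟨?_, ?_, ?_⟩
          · intro j hj
            simp only [Nat.add_sub_cancel] at hj ⊢
            unfold DChain.cw
            by_cases hjn : j < n
            · rw [if_pos hjn, if_pos hjn]
              exact congrArg Int.toNat (if_congr (by omega) rfl rfl)
            · rw [if_neg hjn, if_neg hjn]
          · simp only [Nat.add_sub_cancel]
            rw [DChain.cw_val n _ t t (by omega), DChain.cw_val n _ (t + 1) t (by omega),
              if_neg (lt_irrefl t), if_pos (Nat.lt_succ_self t)]
            have h0 : 0 < DChain.Zf n δ lam t + ((t : ℤ) + 1) := by
              have := hge t (by omega); omega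
            rw [Int.toNat_lt_toNat h0]
            have := hZadj t htn
            omega
          · simp only [Nat.add_sub_cancel]
            rw [hps t (by omega)]
            rw [DChain.cw_val n _ (t + 1) t (by omega), if_pos (Nat.lt_succ_self t)]
            have h0 : (0 : ℤ) ≤ DChain.Zf n δ lam t + ((t : ℤ) + 1) := by
              have := hge t (by omega); omega
            rw [Int.toNat_of_nonneg h0]
            push_cast
            omega
        · rintro ⟨ν, hν, hd1, hd2, hd3⟩
          simp only [Nat.add_sub_cancel] at hd1 hd2 hd3
          have hrn' : T.card - 1 ≤ n := by omega
          rcases Nat.lt_or_ge (T.card - 1) n with hrlt | hrge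
          · have hZr1 : DChain.Zf n δ lam (T.card - 1 + 1) < δ - n := by
              have hnotT : (T.card - 1 + 1) ∉ T := by
                intro hc
                have := (hidx _).1 hc
                omega
              rw [hmemT] at hnotT
              push_neg at hnotT
              exact hnotT (by omega)
            have hZrT : δ - (n : ℤ) ≤ DChain.Zf n δ lam (T.card - 1) := by
              have : (T.card - 1) ∈ T := (hidx _).2 (by omega)
              exact ((hmemT _).1 this).2
            rw [hps _ (by omega)] at hd3
            have hpd := DChain.psize_diff n (DChain.cw n (DChain.Zf n δ lam) (T.card - 1))
              ν (T.card - 1) hrlt hd1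
            have h0 : (0 : ℤ) ≤ DChain.Zf n δ lam (T.card - 1 + 1) + (((T.card - 1) : ℕ) : ℤ) + 1 := by
              have := hge (T.card - 1 + 1) (by omega)
              omega
            have hcwr : ((DChain.cw n (DChain.Zf n δ lam) (T.card - 1) (T.card - 1)) : ℤ)
                = DChain.Zf n δ lam (T.card - 1 + 1) + ((T.card - 1 : ℕ) : ℤ) + 1 := by
              rw [DChain.cw_val n _ (T.card - 1) (T.card - 1) hrlt, if_neg (lt_irrefl _)]
              rw [Int.toNat_of_nonneg (by omega : (0:ℤ) ≤ DChain.Zf n δ lam (T.card - 1 + 1) + (((T.card - 1) : ℕ) + 1))]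
              ring
            have hνn : (psize n ν : ℤ) ≤ n := by exact_mod_cast hν.2
            have hpsr := hps (T.card - 1) (by omega)
            omega
          · have hr : T.card - 1 = n := by omega
            rw [hr] at hd2
            have h1 : DChain.cw n (DChain.Zf n δ lam) n n = 0 := by
              unfold DChain.cw; rw [if_neg (lt_irrefl n)]
            have h2 : ν n = 0 := hν.1.2 n (le_refl n)
            omega
      · -- special case
        push_neg at hsp
        have hansp : DChain.af n δ lam = n := by
          by_contra hc
          have hcn : DChain.af n δ lam < n := by omega
          have hz : DChain.Zf n δ lam n = DChain.Rw lam (n - 1) := by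
            unfold DChain.Zf; rw [if_neg (by omega), if_neg (by omega)]
          unfold DChain.Rw at hz
          have h0 : (0 : ℤ) ≤ (lam (n - 1) : ℤ) := Int.natCast_nonneg _
          omega
        have hbnsp : DChain.af n δ mu = n := by
          by_contra hc
          have hcn : DChain.af n δ mu < n := by omega
          have hz : DChain.Zf n δ mu n = DChain.Rw mu (n - 1) := by
            unfold DChain.Zf; rw [if_neg (by omega), if_neg (by omega)]
          unfold DChain.Rw at hz
          rw [hZZ n (le_refl n)] at hz
          have h0 : (0 : ℤ) ≤ (mu (n - 1) : ℤ) := Int.natCast_nonneg _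
          omega
        have hml : mu = lam := by
          refine hmb.trans (Eq.trans ?_ hla.symm)
          exact congrArg (DChain.cw n (DChain.Zf n δ lam)) (hbnsp.trans hansp.symm)
        have hpivn : δ - (psize n lam : ℤ) = DChain.Zf n δ lam n := by
          rw [← hZa]
          exact congrArg (DChain.Zf n δ lam) hansp
        refine ⟨0, fun _ => lam, fun s _ => hl, fun s h1 h2 => absurd h2 (by omega), ?_,
          ⟨0, le_refl 0, rfl⟩, ⟨0, le_refl 0, hml⟩⟩
        rintro ⟨ν, hν, hd1, hd2, hd3⟩
        simp only [show (1 : ℕ) - 1 = 0 from rfl] at hd2 hd3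
        by_cases hn0 : n = 0
        · subst hn0
          have h1 : ν 0 = 0 := hν.1.2 0 (le_refl 0)
          have h2 : lam 0 = 0 := hl.1.2 0 (le_refl 0)
          omega
        · rw [← hpivn] at hsp
          omega
  · rintro ⟨r, c, hgood, hstep, -, ⟨a, har, hla⟩, ⟨b, hbr, hmb⟩⟩
    have hrn : r ≤ n := by
      by_contra h
      push_neg at h
      have hs := (hstep (n + 1) (by omega) (by omega)).2.1
      simp only [Nat.add_sub_cancel] at hs
      have h3 : c (n + 1) n = 0 := (hgood (n + 1) (by omega)).1.2 n (le_refl n)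
      omega
    have key : ∀ t, t ≤ r → ∃ σ : Equiv.Perm (Fin (n + 1)), ∀ m,
        hatP n (c 0) m + rhoP n δ m = hatP n (c t) (σ m) + rhoP n δ (σ m) := by
      intro t
      induction t with
      | zero => exact fun _ => ⟨Equiv.refl _, fun m => rfl⟩
      | succ t ih =>
        intro ht
        obtain ⟨σ, hσ⟩ := ih (by omega)
        have hs := hstep (t + 1) (by omega) ht
        simp only [Nat.add_sub_cancel] at hs
        have hsw := DChain.swap_step n δ (c t) (c (t + 1)) (t + 1) (by omega) (by omega) hs
        exact ⟨σ.trans (Equiv.swap 0 ⟨t + 1, by omega⟩), fun m => by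
          rw [hσ m, hsw (σ m)]; rfl⟩
    obtain ⟨σa, hσa⟩ := key a har
    obtain ⟨σb, hσb⟩ := key b hbr
    refine ⟨σb.symm.trans σa, fun m => ?_⟩
    have h1 := hσb (σb.symm m)
    simp only [Equiv.apply_symm_apply] at h1
    rw [← hmb] at h1
    rw [← h1, hσa (σb.symm m), ← hla]
    rfl
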